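/- There is no triple of reals θ₂, θ₃, θ₄ such that -cos(2(θ₂+θ₃+θ₄)) + cos(2θ₂) + cos(2θ₃) + cos(2θ₄) > 2√2; equivalently, the CHSH-maximal value 4 is unattainable under the constraint θ₁ = θ₂ + θ₃ + θ₄. -/

import Mathlib

theorem qm_s_function_cannot_exceed_tsirelson :
    ¬ ∃ θ₂ θ₃ θ₄ : ℝ,
        2 * Real.sqrt 2 <
          -Real.cos (2 * (θ₂ + θ₃ + θ₄)) + Real.cos (2 * θ₂)
            + Real.cos (2 * θ₃) + Real.cos (2 * θ₄) := by
  push_neg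
  intro θ₂ θ₃ θ₄
  set s := θ₂ + θ₃ with hs
  have h1 : Real.cos (2 * θ₂) + Real.cos (2 * θ₃)
      = 2 * Real.cos s * Real.cos (θ₂ - θ₃) := by
    rw [Real.cos_add_cos]; ring_nf; rw [hs]; ring
  have h2 : Real.cos (2 * θ₄) - Real.cos (2 * (θ₂ + θ₃ + θ₄))
      = 2 * Real.sin (s + 2 * θ₄) * Real.sin s := by
    rw [Real.cos_sub_cos]
    have e1 : (2 * θ₄ + 2 * (θ₂ + θ₃ + θ₄)) / 2 = s + 2 * θ₄ := by rw [hs]; ring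
    have e2 : (2 * θ₄ - 2 * (θ₂ + θ₃ + θ₄)) / 2 = -s := by rw [hs]; ring
    rw [e1, e2, Real.sin_neg]; ring
  have key : -Real.cos (2 * (θ₂ + θ₃ + θ₄)) + Real.cos (2 * θ₂)
      + Real.cos (2 * θ₃) + Real.cos (2 * θ₄)
      = 2 * Real.cos s * Real.cos (θ₂ - θ₃) + 2 * Real.sin (s + 2 * θ₄) * Real.sin s := by
    linarith [h1, h2]
  rw [key]
  have b1 : 2 * Real.cos s * Real.cos (θ₂ - θ₃) ≤ 2 * |Real.cos s| := by
    have : Real.cos s * Real.cos (θ₂ - θ₃) ≤ |Real.cos s| := by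
      calc Real.cos s * Real.cos (θ₂ - θ₃) ≤ |Real.cos s * Real.cos (θ₂ - θ₃)| := le_abs_self _
        _ = |Real.cos s| * |Real.cos (θ₂ - θ₃)| := abs_mul _ _
        _ ≤ |Real.cos s| * 1 := by
            exact mul_le_mul_of_nonneg_left (Real.abs_cos_le_one _) (abs_nonneg _)
        _ = |Real.cos s| := mul_one _
    linarith
  have b2 : 2 * Real.sin (s + 2 * θ₄) * Real.sin s ≤ 2 * |Real.sin s| := by
    have : Real.sin (s + 2 * θ₄) * Real.sin s ≤ |Real.sin s| := by
      calc Real.sin (s + 2 * θ₄) * Real.sin s ≤ |Real.sin (s + 2 * θ₄) * Real.sin s| := le_abs_self _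
        _ = |Real.sin (s + 2 * θ₄)| * |Real.sin s| := abs_mul _ _
        _ ≤ 1 * |Real.sin s| := by
            exact mul_le_mul_of_nonneg_right (Real.abs_sin_le_one _) (abs_nonneg _)
        _ = |Real.sin s| := one_mul _
    linarith
  have b3 : |Real.cos s| + |Real.sin s| ≤ Real.sqrt 2 := by
    have hsq : (|Real.cos s| + |Real.sin s|) ^ 2 ≤ 2 := by
      nlinarith [Real.sin_sq_add_cos_sq s, sq_abs (Real.cos s), sq_abs (Real.sin s),
        sq_nonneg (|Real.cos s| - |Real.sin s|)]
    have hnn : (0:ℝ) ≤ |Real.cos s| + |Real.sin s| := by positivity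
    nlinarith [Real.sq_sqrt (by norm_num : (2:ℝ) ≥ 0), Real.sqrt_nonneg 2]
  linarith
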